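/- Let s_{12}, s_{13}, s_{23} be scalars such that the polynomial 2(m_{12}m_{13} + m_{12}m_{23} + m_{13}m_{23}) − (m_{12}² + m_{13}² + m_{23}²) in the variables m_{12}, m_{13}, m_{23} is mapped to a scalar multiple of itself under the substitution m_{ij} ↦ s_{ij} m_{ij}. Then s_{12} = s_{13} = s_{23}. -/
import Mathlib


open MvPolynomial

/-- The simplicial volume determinant of a 1-dimensional triangle, as a polynomial
in the squared edge lengths `m₁₂ = X 0`, `m₁₃ = X 1`, `m₂₃ = X 2`. -/
noncomputable def simplicialVolDet : MvPolynomial (Fin 3) ℂ :=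
  2 * (X 0 * X 1 + X 0 * X 2 + X 1 * X 2) - (X 0 ^ 2 + X 1 ^ 2 + X 2 ^ 2)

/-- If the simplicial volume determinant
`2(m₁₂m₁₃ + m₁₂m₂₃ + m₁₃m₂₃) − (m₁₂² + m₁₃² + m₂₃²)` is mapped to a scalar
multiple of itself under the substitution `m_ij ↦ s_ij · m_ij`, then the three
scalars `s_ij` are all equal. -/
theorem simplicial_voldet_scale (s : Fin 3 → ℂ)
    (h : ∃ c : ℂ,
      aeval (fun i => MvPolynomial.C (s i) * (X i : MvPolynomial (Fin 3) ℂ))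
          simplicialVolDet
        = MvPolynomial.C c * simplicialVolDet) :
    s 0 = s 1 ∧ s 1 = s 2 := by
  obtain ⟨c, hc⟩ := h
  have key : ∀ x : Fin 3 → ℂ, eval x (aeval (fun i => MvPolynomial.C (s i) * (X i : MvPolynomial (Fin 3) ℂ)) simplicialVolDet) = c * eval x simplicialVolDet := by
    intro x
    rw [hc]
    simp
  have h01 := key ![1, 1, 0]
  have h12 := key ![0, 1, 1]
  have h0 := key ![1, 0, 0]
  have h1 := key ![0, 1, 0]
  simp [simplicialVolDet, map_ofNat] at h01 h12 h0 h1
  constructor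
  · have : (s 0 - s 1) ^ 2 = 0 := by linear_combination -h01
    have := pow_eq_zero_iff (n := 2) (by norm_num) |>.mp this
    exact sub_eq_zero.mp this
  · have h2 := key ![0, 0, 1]
    simp [simplicialVolDet, map_ofNat] at h2
    have : (s 1 - s 2) ^ 2 = 0 := by linear_combination -h12
    have := pow_eq_zero_iff (n := 2) (by norm_num) |>.mp this
    exact sub_eq_zero.mp this
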